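/- arXiv:2212.06386 — 9 statements merged into one kernel-verified Lean document; each statement's English description precedes it below -/
import Mathlib

section
/- Let (Ω, P) be a probability space and X, ΔX, Y, ΔY integrable real random variables such that the random pair (X, ΔX) is independent of the random pair (Y, ΔY), and such that X·Y, Y·ΔX, and X·ΔY are integrable. Then E[X·Y] = E[X]·E[Y] and E[Y·ΔX + X·ΔY] = E[Y]·E[ΔX] + E[X]·E[ΔY]. In particular, if (X, ΔX) is an unbiased dual-number estimator of (x, δx) and (Y, ΔY) is an independent unbiased dual-number estimator of (y, δy), then (X·Y, Y·ΔX + X·ΔY) is an unbiased dual-number estimator of (x·y, y·δx + x·δy). -/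
open MeasureTheory ProbabilityTheory

/-- **Correctness of the dual-number derivative of the product-of-estimators primitive.**
If the random pair `(X, ΔX)` is independent of the random pair `(Y, ΔY)`, all four
variables are integrable, and the products `X·Y`, `Y·ΔX`, `X·ΔY` are integrable, then
`E[X·Y] = E[X]·E[Y]` and `E[Y·ΔX + X·ΔY] = E[Y]·E[ΔX] + E[X]·E[ΔY]`.  In particular, if
`(X, ΔX)` estimates the dual number `(x, δx)` and `(Y, ΔY)` independently estimates
`(y, δy)`, then `(X·Y, Y·ΔX + X·ΔY)` estimates `(x·y, y·δx + x·δy)`. -/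
theorem times_estimator_dual_unbiased {Ω : Type*} [MeasurableSpace Ω]
    (P : Measure Ω) [IsProbabilityMeasure P]
    (X ΔX Y ΔY : Ω → ℝ)
    (hX : Integrable X P) (hΔX : Integrable ΔX P)
    (hY : Integrable Y P) (hΔY : Integrable ΔY P)
    (hXY : Integrable (fun ω => X ω * Y ω) P)
    (hYΔX : Integrable (fun ω => Y ω * ΔX ω) P)
    (hXΔY : Integrable (fun ω => X ω * ΔY ω) P)
    (hindep : IndepFun (fun ω => (X ω, ΔX ω)) (fun ω => (Y ω, ΔY ω)) P) :
    (∫ ω, X ω * Y ω ∂P = (∫ ω, X ω ∂P) * ∫ ω, Y ω ∂P) ∧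
      ∫ ω, (Y ω * ΔX ω + X ω * ΔY ω) ∂P
        = (∫ ω, Y ω ∂P) * (∫ ω, ΔX ω ∂P) + (∫ ω, X ω ∂P) * (∫ ω, ΔY ω ∂P) := by
  have h1 : IndepFun X Y P := hindep.comp measurable_fst measurable_fst
  have h2 : IndepFun ΔX Y P := hindep.comp measurable_snd measurable_fst
  have h3 : IndepFun X ΔY P := hindep.comp measurable_fst measurable_snd
  refine ⟨h1.integral_fun_mul_eq_mul_integral hX.aestronglyMeasurable hY.aestronglyMeasurable, ?_⟩
  rw [integral_add hYΔX hXΔY]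
  have e2 : ∫ ω, Y ω * ΔX ω ∂P = (∫ ω, Y ω ∂P) * ∫ ω, ΔX ω ∂P :=
    h2.symm.integral_fun_mul_eq_mul_integral hY.aestronglyMeasurable hΔX.aestronglyMeasurable
  have e3 : ∫ ω, X ω * ΔY ω ∂P = (∫ ω, X ω ∂P) * ∫ ω, ΔY ω ∂P :=
    h3.integral_fun_mul_eq_mul_integral hX.aestronglyMeasurable hΔY.aestronglyMeasurable
  rw [e2, e3]
end

section
/- Let λ > 0 and let μ be a probability measure on ℝ such that the identity function is integrable with mean m̄ = ∫ x dμ(x). Then the series ∑_{n=0}^∞ (exp(−λ)·λⁿ/n!) · ∫_{(Fin n) → ℝ} (∏_{i : Fin n} (x i)/λ) d(⊗_{i : Fin n} μ) converges, and exp(λ) times its sum equals exp(m̄). That is, the estimator that samples N ∼ Poisson(λ), then samples N i.i.d. values x₁,…,x_N ∼ μ, and returns exp(λ)·∏_{i=1}^N (x_i/λ), is an unbiased estimator of exp(∫ x dμ(x)). -/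
open MeasureTheory

/-- **Correctness of the `exp^{R̃}` primitive.**
Let `λ > 0` and let `μ` be a probability measure on `ℝ` whose identity function is
integrable with mean `mbar`.  The Poisson-randomized product estimator, which samples
`N ∼ Poisson(λ)`, then `N` i.i.d. values `x₁,…,x_N ∼ μ` and returns
`exp(λ)·∏ᵢ (xᵢ/λ)`, is an unbiased estimator of `exp(mbar)`: the defining series
converges and `exp(λ)` times its sum equals `exp(mbar)`. -/
theorem exp_estimator_unbiased (lam : ℝ) (hlam : 0 < lam)
    (μ : Measure ℝ) [IsProbabilityMeasure μ]
    (hint : Integrable (fun x => x) μ) (mbar : ℝ) (hmean : mbar = ∫ x, x ∂μ) :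
    Summable (fun n : ℕ => Real.exp (-lam) * lam ^ n / n.factorial *
        ∫ x : Fin n → ℝ, ∏ i, x i / lam ∂(Measure.pi fun _ : Fin n => μ)) ∧
      Real.exp lam * (∑' n : ℕ, Real.exp (-lam) * lam ^ n / n.factorial *
          ∫ x : Fin n → ℝ, ∏ i, x i / lam ∂(Measure.pi fun _ : Fin n => μ))
        = Real.exp mbar := by
  letI : MeasureSpace ℝ := ⟨μ⟩
  have hvol : (volume : Measure ℝ) = μ := rfl
  have key : ∀ n : ℕ, (∫ x : Fin n → ℝ, ∏ i, x i / lam ∂(Measure.pi fun _ : Fin n => μ))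
      = (mbar / lam) ^ n := by
    intro n
    have : (Measure.pi fun _ : Fin n => μ) = (volume : Measure (Fin n → ℝ)) := rfl
    rw [this]
    rw [integral_fintype_prod_volume_eq_pow (ι := Fin n) (fun x : ℝ => x / lam)]
    simp only [Fintype.card_fin]
    congr 1
    rw [integral_div, hvol, ← hmean]
  have hterm : ∀ n : ℕ, Real.exp (-lam) * lam ^ n / n.factorial *
      (∫ x : Fin n → ℝ, ∏ i, x i / lam ∂(Measure.pi fun _ : Fin n => μ))
      = Real.exp (-lam) * (mbar ^ n / n.factorial) := by
    intro n
    rw [key n, div_pow]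
    field_simp
  have hsummable : Summable (fun n : ℕ => Real.exp (-lam) * (mbar ^ n / n.factorial)) :=
    (Real.summable_pow_div_factorial mbar).mul_left _
  constructor
  · exact hsummable.congr fun n => (hterm n).symm
  · have : (∑' n : ℕ, Real.exp (-lam) * lam ^ n / n.factorial *
        ∫ x : Fin n → ℝ, ∏ i, x i / lam ∂(Measure.pi fun _ : Fin n => μ))
        = Real.exp (-lam) * Real.exp mbar := by
      rw [tsum_congr hterm, tsum_mul_left, Real.exp_eq_exp_ℝ, NormedSpace.exp_eq_tsum_div]
    rw [this, ← mul_assoc, ← Real.exp_add]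
    simp
end

section
/- Let θ₀ ∈ ℝ, let h : ℝ → ℝ satisfy HasDerivAt h h' θ₀ with 0 < h(θ₀) < 1, and let g : ℝ → Bool → ℝ be such that for each b ∈ Bool the map θ ↦ g θ b has derivative g'(b) at θ₀. For each b ∈ Bool let ν_b be a probability measure on ℝ × ℝ whose coordinate projections π₁ and π₂ are integrable, with ∫ π₁ dν_b = g θ₀ b and ∫ π₂ dν_b = g'(b). Then the function L(θ) = h(θ)·g θ true + (1 − h(θ))·g θ false is differentiable at θ₀, and its derivative equals h(θ₀)·∫ (δy + y·(h'/h(θ₀))) dν_true(y, δy) + (1 − h(θ₀))·∫ (δy − y·(h'/(1 − h(θ₀)))) dν_false(y, δy). That is, the REINFORCE dual-number expectation estimator for a Bernoulli coin flip is unbiased: sampling b ∼ Bernoulli(h(θ₀)), then (y, δy) ∼ ν_b, and returning δy + y·(d/dθ log Bern(b; h(θ))|_{θ₀}) gives an unbiased estimate of L'(θ₀). -/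
open MeasureTheory

/-- **Lemma 4.1: correctness of the built-in derivative of `flip_REINFORCE`.**
Let `h` have derivative `h'` at `θ₀` with `0 < h θ₀ < 1`, and for each Boolean `b`
let `θ ↦ g θ b` have derivative `g' b` at `θ₀`.  Let `ν b` be a probability measure
on `ℝ × ℝ` (a dual-number estimator) with integrable coordinates, first-coordinate
mean `g θ₀ b` and second-coordinate mean `g' b`.  Then the loss
`L θ = h θ · g θ true + (1 − h θ) · g θ false` is differentiable at `θ₀`, with
derivative equal to the expectation of the REINFORCE dual-number estimate
`δy + y·(d/dθ log Bern(b; h θ))|_{θ₀}`. -/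
theorem flip_reinforce_correct (θ₀ h' : ℝ) (h : ℝ → ℝ)
    (hh : HasDerivAt h h' θ₀) (h0 : 0 < h θ₀) (h1 : h θ₀ < 1)
    (g : ℝ → Bool → ℝ) (g' : Bool → ℝ)
    (hg : ∀ b, HasDerivAt (fun θ => g θ b) (g' b) θ₀)
    (ν : Bool → Measure (ℝ × ℝ)) [∀ b, IsProbabilityMeasure (ν b)]
    (hint1 : ∀ b, Integrable (fun p : ℝ × ℝ => p.1) (ν b))
    (hint2 : ∀ b, Integrable (fun p : ℝ × ℝ => p.2) (ν b))
    (hmean1 : ∀ b, ∫ p : ℝ × ℝ, p.1 ∂(ν b) = g θ₀ b)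
    (hmean2 : ∀ b, ∫ p : ℝ × ℝ, p.2 ∂(ν b) = g' b) :
    HasDerivAt (fun θ => h θ * g θ true + (1 - h θ) * g θ false)
      (h θ₀ * (∫ p : ℝ × ℝ, (p.2 + p.1 * (h' / h θ₀)) ∂(ν true))
        + (1 - h θ₀) * ∫ p : ℝ × ℝ, (p.2 - p.1 * (h' / (1 - h θ₀))) ∂(ν false)) θ₀ := by
  have hIt : ∫ p : ℝ × ℝ, (p.2 + p.1 * (h' / h θ₀)) ∂(ν true)
      = g' true + g θ₀ true * (h' / h θ₀) := by
    rw [integral_add (hint2 true) ((hint1 true).mul_const _), integral_mul_const,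
      hmean1, hmean2]
  have hIf : ∫ p : ℝ × ℝ, (p.2 - p.1 * (h' / (1 - h θ₀))) ∂(ν false)
      = g' false - g θ₀ false * (h' / (1 - h θ₀)) := by
    rw [integral_sub (hint2 false) ((hint1 false).mul_const _), integral_mul_const,
      hmean1, hmean2]
  rw [hIt, hIf]
  have : HasDerivAt (fun θ => h θ * g θ true + (1 - h θ) * g θ false)
      (h' * g θ₀ true + h θ₀ * g' true + ((0 - h') * g θ₀ false + (1 - h θ₀) * g' false)) θ₀ :=
    (hh.mul (hg true)).add ((hasDerivAt_const θ₀ (1:ℝ)).sub hh |>.mul (hg false))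
  convert this using 1
  have h0' : h θ₀ ≠ 0 := ne_of_gt h0
  have h1' : (1 : ℝ) - h θ₀ ≠ 0 := by linarith
  field_simp
  ring
end

section
/- Let μ, σ : ℝ → ℝ with σ(θ) > 0 for all θ, and let f : ℝ → ℝ → ℝ. Define g(θ)(x) = f(θ)(μ(θ) + σ(θ)·x). Assume: (i) for each θ, x ↦ g(θ)(x) is measurable and integrable with respect to gaussianReal 0 1; (ii) for (gaussianReal 0 1)-almost every x, the map θ ↦ g(θ)(x) is differentiable with derivative ∂_θ g(θ)(x); and (iii) ∂_θ g is locally dominated with respect to gaussianReal 0 1. Then the loss L(θ) = ∫ f(θ)(y) d(gaussianReal (μ θ) ((σ θ)²))(y) is differentiable at every θ, with L'(θ) = ∫ ∂_θ g(θ)(x) d(gaussianReal 0 1)(x). That is, the reparameterization-trick gradient estimator for Gaussian sampling is unbiased. -/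
open MeasureTheory ProbabilityTheory
open Filter

/-- A function `g : ℝ × X → ℝ` is locally dominated with respect to a measure `ν` on
`X` if for every `θ₀` there exist `ε > 0` and a `ν`-integrable nonnegative function
`m` such that `|g θ x| ≤ m x` for all `θ` with `|θ − θ₀| < ε` and `ν`-a.e. `x`. -/
def LocallyDominated {X : Type*} [MeasurableSpace X] (ν : Measure X)
    (g : ℝ → X → ℝ) : Prop :=
  ∀ θ₀ : ℝ, ∃ ε > (0 : ℝ), ∃ m : X → ℝ, Integrable m ν ∧ (∀ x, 0 ≤ m x) ∧
    ∀ θ : ℝ, |θ - θ₀| < ε → ∀ᵐ x ∂ν, |g θ x| ≤ m x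

/-- **Unbiasedness of the reparameterization-trick (REPARAM) gradient estimator for
Gaussian sampling.**  With `g θ x = f θ (μ θ + σ θ · x)` measurable and integrable
w.r.t. the standard Gaussian, differentiable in `θ` with derivative `g'` for a.e. `x`,
and `g'` locally dominated, the loss `L θ = ∫ f θ y dN(μ θ, (σ θ)²)(y)` is
differentiable with `L'(θ) = ∫ g' θ x dN(0,1)(x)`. -/
theorem normal_reparam_unbiased (μ σ : ℝ → ℝ) (hσ : ∀ θ, 0 < σ θ)
    (f : ℝ → ℝ → ℝ) (g g' : ℝ → ℝ → ℝ)
    (hg : ∀ θ x, g θ x = f θ (μ θ + σ θ * x))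
    (hmeas : ∀ θ, Measurable (g θ))
    (hint : ∀ θ, Integrable (g θ) (gaussianReal 0 1))
    (hderiv : ∀ᵐ x ∂(gaussianReal 0 1), ∀ θ, HasDerivAt (fun θ' => g θ' x) (g' θ x) θ)
    (hdom : LocallyDominated (gaussianReal 0 1) g') :
    ∀ θ : ℝ,
      HasDerivAt (fun θ' => ∫ y, f θ' y ∂(gaussianReal (μ θ') (((σ θ') ^ 2).toNNReal)))
        (∫ x, g' θ x ∂(gaussianReal 0 1)) θ := by
  intro θ
  classical
  set ν : Measure ℝ := gaussianReal 0 1 with hν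
  -- change of variables: the loss equals ∫ g θ' x dN(0,1)
  have key : ∀ θ' : ℝ, (∫ y, f θ' y ∂(gaussianReal (μ θ') (((σ θ') ^ 2).toNNReal)))
      = ∫ x, g θ' x ∂ν := by
    intro θ'
    have hσ' := (hσ θ').ne'
    have hmap : ν.map (fun x => μ θ' + σ θ' * x)
        = gaussianReal (μ θ') (((σ θ') ^ 2).toNNReal) := by
      have h1 : (fun x : ℝ => μ θ' + σ θ' * x) = (fun y => μ θ' + y) ∘ (fun x => σ θ' * x) := rfl
      rw [h1, ← Measure.map_map (measurable_const_add _) (measurable_const_mul _),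
        gaussianReal_map_const_mul, gaussianReal_map_const_add]
      congr 1
      · ring
      · rw [mul_one, ← NNReal.coe_inj]
        simp [Real.coe_toNNReal _ (sq_nonneg (σ θ'))]
    have hfm : Measurable (f θ') := by
      have : f θ' = (g θ') ∘ (fun y => (y - μ θ') / σ θ') := by
        funext y
        simp only [Function.comp_apply, hg]
        field_simp
        congr 1; ring
      rw [this]
      exact (hmeas θ').comp ((measurable_id.sub_const _).div_const _)
    rw [← hmap, integral_map (by fun_prop) hfm.aestronglyMeasurable]
    simp_rw [← hg]
  have hfun : (fun θ' => ∫ y, f θ' y ∂(gaussianReal (μ θ') (((σ θ') ^ 2).toNNReal)))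
      = fun θ' => ∫ x, g θ' x ∂ν := funext key
  rw [hfun]
  obtain ⟨ε, hε, m, hm_int, hm_nonneg, hm_bound⟩ := hdom θ
  -- a nice measurable null set off which everything is differentiable
  set N : Set ℝ := toMeasurable ν {x | ¬ ∀ θ', HasDerivAt (fun t => g t x) (g' θ' x) θ'} with hN
  have hNmeas : MeasurableSet N := measurableSet_toMeasurable _ _
  have hNnull : ν N = 0 := by
    rw [hN, measure_toMeasurable]
    exact hderiv
  have hNgood : ∀ x ∉ N, ∀ θ', HasDerivAt (fun t => g t x) (g' θ' x) θ' := by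
    intro x hx
    by_contra h
    exact hx (subset_toMeasurable _ _ h)
  -- modified versions, jointly measurable
  set G : ℝ → ℝ → ℝ := fun t x => if x ∈ N then 0 else g t x with hG
  set G' : ℝ → ℝ → ℝ := fun t x => if x ∈ N then 0 else g' t x with hG'
  have hGmeas : ∀ t, Measurable (G t) := fun t =>
    Measurable.ite hNmeas measurable_const (hmeas t)
  have hGcont : ∀ x, Continuous fun t => G t x := by
    intro x
    by_cases hx : x ∈ N
    · have : (fun t => G t x) = fun _ => (0:ℝ) := funext fun t => if_pos hx
      rw [this]; exact continuous_const
    · have : (fun t => G t x) = fun t => g t x := funext fun t => if_neg hx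
      rw [this, continuous_iff_continuousAt]
      exact fun t => (hNgood x hx t).differentiableAt.continuousAt
  have hGuncurry : Measurable (Function.uncurry G) :=
    measurable_uncurry_of_continuous_of_measurable hGcont hGmeas
  have hGlim : ∀ (t x : ℝ), Tendsto (fun n : ℕ => (G (t + 1 / (n + 1)) x - G t x) * (n + 1))
      atTop (nhds (G' t x)) := by
    intro t x
    by_cases hx : x ∈ N
    · simp only [hG, hG', hx, if_true, sub_self, zero_mul]
      exact tendsto_const_nhds
    · have e1 : ∀ t', G t' x = g t' x := fun t' => if_neg hx
      have e2 : G' t x = g' t x := if_neg hx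
      simp only [e1, e2]
      have hslope := hasDerivAt_iff_tendsto_slope.mp (hNgood x hx t)
      have hseq : Tendsto (fun n : ℕ => t + 1 / (n + 1 : ℝ)) atTop (nhdsWithin t {t}ᶜ) := by
        apply tendsto_nhdsWithin_of_tendsto_nhds_of_eventually_within
        · have : Tendsto (fun n : ℕ => (1 : ℝ) / (n + 1)) atTop (nhds 0) :=
            tendsto_one_div_add_atTop_nhds_zero_nat
          simpa using (tendsto_const_nhds.add this)
        · filter_upwards with n
          have h1 : (0:ℝ) < 1 / (n + 1) := by positivity
          simp only [Set.mem_compl_iff, Set.mem_singleton_iff]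
          intro h; nlinarith [congrArg (· - t) h]
      refine (hslope.comp hseq).congr (fun n => ?_)
      simp only [Function.comp_apply, slope_def_field, add_sub_cancel_left]
      rw [div_div_eq_mul_div, div_one]
  have hG'uncurry : Measurable (Function.uncurry G') := by
    apply measurable_of_tendsto_metrizable (f := fun n : ℕ => fun p : ℝ × ℝ =>
      (G (p.1 + 1 / (n + 1)) p.2 - G p.1 p.2) * (n + 1))
    · intro n
      apply Measurable.mul_const
      exact ((hGuncurry.comp ((measurable_fst.add_const _).prodMk measurable_snd)).sub
        hGuncurry)
    · rw [tendsto_pi_nhds]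
      exact fun p => hGlim p.1 p.2
  -- good measurable nonneg bound
  obtain ⟨m₀, hm₀meas, hm₀eq⟩ : ∃ m₀ : ℝ → ℝ, Measurable m₀ ∧ m =ᵐ[ν] m₀ :=
    ⟨hm_int.1.mk m, hm_int.1.stronglyMeasurable_mk.measurable, hm_int.1.ae_eq_mk⟩
  set M : ℝ → ℝ := fun x => max (m₀ x) 0 with hM
  have hMmeas : Measurable M := hm₀meas.max measurable_const
  have hMint : Integrable M ν := by
    refine Integrable.mono' (hm_int.congr hm₀eq).abs hMmeas.aestronglyMeasurable ?_
    filter_upwards with x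
    simp only [hM, Real.norm_eq_abs]
    rw [abs_of_nonneg (le_max_right _ _)]
    exact max_le (le_abs_self _) (abs_nonneg _)
  have hMbound : ∀ t : ℝ, |t - θ| < ε → ∀ᵐ x ∂ν, |G' t x| ≤ M x := by
    intro t ht
    filter_upwards [hm_bound t ht, hm₀eq, measure_eq_zero_iff_ae_notMem.mp hNnull] with x hx hx2 hx3
    simp only [hG', hx3, if_false, hM]
    calc |g' t x| ≤ m x := hx
    _ = m₀ x := hx2
    _ ≤ max (m₀ x) 0 := le_max_left _ _
  -- Fubini swap of a.e. quantifiers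
  set ρ : Measure ℝ := volume.restrict (Metric.ball θ ε) with hρ
  have hsetm : MeasurableSet {p : ℝ × ℝ | |G' p.1 p.2| ≤ M p.2} := by
    apply measurableSet_le
    · exact hG'uncurry.abs
    · exact hMmeas.comp measurable_snd
  have hswap : ∀ᵐ x ∂ν, ∀ᵐ t ∂ρ, |G' t x| ≤ M x := by
    rw [← Measure.ae_ae_comm hsetm]
    filter_upwards [ae_restrict_mem measurableSet_ball] with t ht
    exact hMbound t (by simpa [Metric.mem_ball, Real.dist_eq] using ht)
  -- a.e. Lipschitz on the ball
  have h_lip : ∀ᵐ x ∂ν, LipschitzOnWith (Real.nnabs (M x)) (fun t => g t x)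
      (Metric.ball θ ε) := by
    filter_upwards [hswap, measure_eq_zero_iff_ae_notMem.mp hNnull] with x hx hxN
    have hG'eq : ∀ t, G' t x = g' t x := fun t => by simp [hG', hxN]
    have hMx : 0 ≤ M x := le_max_right _ _
    rw [lipschitzOnWith_iff_dist_le_mul]
    intro s hs t ht
    have hIcc : Set.uIcc t s ⊆ Metric.ball θ ε :=
      (convex_ball θ ε).ordConnected.uIcc_subset ht hs
    have hmemball : ∀ᵐ u ∂volume, u ∈ Metric.ball θ ε → |g' u x| ≤ M x := by
      have := (ae_restrict_iff' measurableSet_ball).mp hx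
      filter_upwards [this] with u hu hu2
      rw [← hG'eq u]; exact hu hu2
    have hII : IntervalIntegrable (fun u => g' u x) volume t s := by
      rw [intervalIntegrable_iff]
      refine Integrable.mono' (g := fun _ => M x)
        (integrableOn_const measure_Ioc_lt_top.ne) ?_ ?_
      · have : Measurable fun u => G' u x :=
          hG'uncurry.comp (measurable_id.prodMk measurable_const)
        have e : (fun u => G' u x) = fun u => g' u x := funext fun u => hG'eq u
        exact (e ▸ this).aestronglyMeasurable
      · rw [ae_restrict_iff' measurableSet_uIoc]
        filter_upwards [hmemball] with u hu hu2
        rw [Real.norm_eq_abs]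
        exact hu (hIcc (Set.uIoc_subset_uIcc hu2))
    have hftc : ∫ u in t..s, g' u x = g s x - g t x :=
      intervalIntegral.integral_eq_sub_of_hasDerivAt
        (fun u _ => hNgood x hxN u) hII
    have hbnd : ‖∫ u in t..s, g' u x‖ ≤ M x * |s - t| := by
      apply intervalIntegral.norm_integral_le_of_norm_le_const_ae
      filter_upwards [hmemball] with u hu hu2
      exact (Real.norm_eq_abs _) ▸ hu (hIcc (Set.uIoc_subset_uIcc hu2))
    rw [Real.dist_eq, Real.dist_eq]
    calc |g s x - g t x| = ‖∫ u in t..s, g' u x‖ := by rw [hftc]; rfl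
    _ ≤ M x * |s - t| := hbnd
    _ = (Real.nnabs (M x) : ℝ) * |s - t| := by
        rw [Real.coe_nnabs, abs_of_nonneg hMx]
  -- measurability of g' θ
  have hg'meas : AEStronglyMeasurable (g' θ) ν := by
    have : Measurable fun x => G' θ x :=
      hG'uncurry.comp (measurable_const.prodMk measurable_id)
    refine this.aestronglyMeasurable.congr ?_
    filter_upwards [measure_eq_zero_iff_ae_notMem.mp hNnull] with x hx
    simp [hG', hx]
  have hMint' := hMint
  exact (hasDerivAt_integral_of_dominated_loc_of_lip (Metric.ball_mem_nhds θ hε)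
    (Filter.Eventually.of_forall fun θ' => (hmeas θ').aestronglyMeasurable)
    (hint θ) hg'meas h_lip hMint
    (hderiv.mono fun x hx => hx θ)).2
end

section
/- Let μ, σ : ℝ → ℝ be differentiable with σ(θ) > 0 for all θ, let f : ℝ → ℝ → ℝ, and let ϕ(θ, x) = gaussianPDFReal (μ θ) ((σ θ)²) x denote the Gaussian density. Assume: (i) for each θ, x ↦ f(θ)(x)·ϕ(θ, x) is Lebesgue-measurable and Lebesgue-integrable; (ii) for Lebesgue-almost every x, the map θ ↦ f(θ)(x)·ϕ(θ, x) is differentiable; and (iii) its θ-derivative is locally dominated with respect to Lebesgue measure. Then the loss L(θ) = ∫ f(θ)(x) d(gaussianReal (μ θ) ((σ θ)²))(x) is differentiable at every θ, with L'(θ) = ∫ ( f(θ)(x)·(∂_θ ϕ(θ, x) / ϕ(θ, x)) + ∂_θ f(θ)(x) ) d(gaussianReal (μ θ) ((σ θ)²))(x). That is, the REINFORCE (score-function) gradient estimator for normal_REINFORCE is unbiased. -/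
open MeasureTheory ProbabilityTheory
open Real NNReal Filter Topology
open scoped ENNReal

lemma integral_gaussianReal_eq_mul (μ0 : ℝ) {v : ℝ≥0} (hv : v ≠ 0) (g : ℝ → ℝ) :
    ∫ x, g x ∂(gaussianReal μ0 v) = ∫ x, gaussianPDFReal μ0 v x * g x := by
  rw [gaussianReal_of_var_ne_zero _ hv]
  have hd : gaussianPDF μ0 v = fun x => (((gaussianPDFReal μ0 v x).toNNReal : ℝ≥0) : ℝ≥0∞) :=
    rfl
  rw [hd, integral_withDensity_eq_integral_smul ((measurable_gaussianPDFReal μ0 v).real_toNNReal) g]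
  refine integral_congr_ae (Filter.Eventually.of_forall fun x => ?_)
  show (gaussianPDFReal μ0 v x).toNNReal • g x = gaussianPDFReal μ0 v x * g x
  rw [NNReal.smul_def, Real.coe_toNNReal _ (gaussianPDFReal_nonneg μ0 v x), smul_eq_mul]

lemma gaussian_param_differentiable (μ σ : ℝ → ℝ)
    (hμ : Differentiable ℝ μ) (hσd : Differentiable ℝ σ) (hσ : ∀ θ, 0 < σ θ) (x θ : ℝ) :
    DifferentiableAt ℝ (fun t => gaussianPDFReal (μ t) (((σ t) ^ 2).toNNReal) x) θ := by
  have hcoe : ∀ t, (((σ t) ^ 2).toNNReal : ℝ) = (σ t) ^ 2 := fun t =>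
    Real.coe_toNNReal _ (sq_nonneg _)
  have heq : (fun t => gaussianPDFReal (μ t) (((σ t) ^ 2).toNNReal) x)
      = fun t => (Real.sqrt (2 * π * (σ t) ^ 2))⁻¹ * Real.exp (-(x - μ t) ^ 2 / (2 * (σ t) ^ 2)) := by
    funext t
    rw [gaussianPDFReal, hcoe]
  rw [heq]
  have hσ2 : ∀ t, (0:ℝ) < (σ t) ^ 2 := fun t => pow_pos (hσ t) 2
  have hpi := Real.pi_pos
  have h1 : DifferentiableAt ℝ (fun t => 2 * π * (σ t) ^ 2) θ :=
    (differentiableAt_const _).mul ((hσd θ).pow 2)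
  have hsq : DifferentiableAt ℝ (fun t => Real.sqrt (2 * π * (σ t) ^ 2)) θ :=
    h1.sqrt (by have := hσ θ; positivity)
  have hsqne : Real.sqrt (2 * π * (σ θ) ^ 2) ≠ 0 :=
    (Real.sqrt_pos.mpr (by have := hσ θ; positivity)).ne'
  refine (hsq.inv hsqne).mul (DifferentiableAt.exp ?_)
  exact (((differentiableAt_const _).sub (hμ θ)).pow 2).neg.div
    ((differentiableAt_const _).mul ((hσd θ).pow 2)) (by have := hσ2 θ; positivity)

/-- slope sequence convergence -/
lemma slope_seq_tendsto {g : ℝ → ℝ} {t : ℝ} (h : HasDerivAt g (deriv g t) t) :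
    Tendsto (fun n : ℕ => (g (t + 1/(n+1)) - g t) / (1/(n+1)))
      atTop (𝓝 (deriv g t)) := by
  have hslope := hasDerivAt_iff_tendsto_slope.mp h
  have hpos : ∀ n : ℕ, (0:ℝ) < 1/(n+1) := fun n => by positivity
  have hseq : Tendsto (fun n : ℕ => t + 1/(n+1)) atTop (𝓝[≠] t) := by
    refine tendsto_nhdsWithin_of_tendsto_nhds_of_eventually_within _ ?_ ?_
    · have := tendsto_one_div_add_atTop_nhds_zero_nat (𝕜 := ℝ)
      have h2 : Tendsto (fun n : ℕ => t + 1/(n+1)) atTop (𝓝 (t + 0)) :=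
        tendsto_const_nhds.add (by exact_mod_cast this)
      simpa using h2
    · exact Eventually.of_forall fun n => by
        simp only [Set.mem_compl_iff, Set.mem_singleton_iff]
        have := hpos n; intro hc; nlinarith [hc]
  have := hslope.comp hseq
  refine this.congr fun n => ?_
  simp only [Function.comp_apply, slope_def_field]
  rw [div_eq_div_iff (by have := hpos n; intro hc; nlinarith) (hpos n).ne']
  ring

/-- **Unbiasedness of the REINFORCE (score-function) gradient estimator for
`normal_REINFORCE`.**  Let `μ, σ` be differentiable with `σ > 0`, and let
`ϕ θ x` be the Gaussian density of `N(μ θ, (σ θ)²)`.  If `x ↦ f θ x · ϕ θ x`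
is Lebesgue-measurable and integrable for each `θ`, differentiable in `θ` for
a.e. `x`, with locally dominated `θ`-derivative, then the loss
`L θ = ∫ f θ x dN(μ θ, (σ θ)²)(x)` is differentiable with
`L'(θ) = ∫ (f θ x · (∂_θ ϕ θ x / ϕ θ x) + ∂_θ f θ x) dN(μ θ, (σ θ)²)(x)`. -/
theorem normal_reinforce_unbiased (μ σ : ℝ → ℝ)
    (hμ : Differentiable ℝ μ) (hσd : Differentiable ℝ σ) (hσ : ∀ θ, 0 < σ θ)
    (f : ℝ → ℝ → ℝ) (φ : ℝ → ℝ → ℝ)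
    (hφ : ∀ θ x, φ θ x = gaussianPDFReal (μ θ) (((σ θ) ^ 2).toNNReal) x)
    (hmeas : ∀ θ, Measurable (fun x => f θ x * φ θ x))
    (hint : ∀ θ, Integrable (fun x => f θ x * φ θ x) (volume : Measure ℝ))
    (hderiv : ∀ᵐ x ∂(volume : Measure ℝ), ∀ θ : ℝ,
      DifferentiableAt ℝ (fun θ' => f θ' x * φ θ' x) θ)
    (hdom : LocallyDominated (volume : Measure ℝ)
      (fun θ x => deriv (fun θ' => f θ' x * φ θ' x) θ)) :
    ∀ θ : ℝ,
      HasDerivAt (fun θ' => ∫ x, f θ' x ∂(gaussianReal (μ θ') (((σ θ') ^ 2).toNNReal)))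
        (∫ x, (f θ x * (deriv (fun θ' => φ θ' x) θ / φ θ x)
            + deriv (fun θ' => f θ' x) θ)
          ∂(gaussianReal (μ θ) (((σ θ) ^ 2).toNNReal))) θ := by
  intro θ
  classical
  have hv : ∀ t : ℝ, ((σ t) ^ 2).toNNReal ≠ 0 := fun t =>
    (Real.toNNReal_pos.mpr (pow_pos (hσ t) 2)).ne'
  have hφpos : ∀ t x, 0 < φ t x := fun t x => by
    rw [hφ]; exact gaussianPDFReal_pos _ _ _ (hv t)
  have hφdiff : ∀ x t, DifferentiableAt ℝ (fun t' => φ t' x) t := by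
    intro x t
    have h := gaussian_param_differentiable μ σ hμ hσd hσ x t
    have he : (fun t' => φ t' x) = fun t' => gaussianPDFReal (μ t') (((σ t') ^ 2).toNNReal) x :=
      funext fun t' => hφ t' x
    rw [he]; exact h
  -- the bad null set
  set N : Set ℝ := toMeasurable volume {x | ¬ ∀ t : ℝ, DifferentiableAt ℝ (fun t' => f t' x * φ t' x) t} with hNdef
  have hNm : MeasurableSet N := measurableSet_toMeasurable _ _
  have hNnull : volume N = 0 := by
    rw [hNdef, measure_toMeasurable]
    exact hderiv
  have hNd : ∀ x ∉ N, ∀ t : ℝ, DifferentiableAt ℝ (fun t' => f t' x * φ t' x) t := by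
    intro x hx
    by_contra hc
    exact hx (subset_toMeasurable _ _ hc)
  have hNae : ∀ᵐ x ∂(volume : Measure ℝ), x ∉ N := measure_eq_zero_iff_ae_notMem.mp hNnull
  obtain ⟨ε, εpos, m, hm_int, hm_nonneg, hm_bound⟩ := hdom θ
  -- modified jointly measurable version
  set Ftil : ℝ → ℝ → ℝ := fun t x => if x ∈ N then 0 else f t x * φ t x with hFtil
  have hFtilMeas : ∀ t, Measurable (Ftil t) := fun t =>
    Measurable.ite hNm measurable_const (hmeas t)
  have hFtilCont : ∀ x, Continuous fun t => Ftil t x := by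
    intro x
    by_cases hx : x ∈ N
    · simp only [hFtil, if_pos hx]; exact continuous_const
    · simp only [hFtil, if_neg hx]
      exact Differentiable.continuous fun t => hNd x hx t
  have hFtilU : Measurable (Function.uncurry Ftil) :=
    measurable_uncurry_of_continuous_of_measurable hFtilCont hFtilMeas
  -- sequence of difference quotients (joint)
  set Dseq : ℕ → ℝ × ℝ → ℝ := fun n p =>
    (Ftil (p.1 + 1/(n+1)) p.2 - Ftil p.1 p.2) / (1/(n+1)) with hDseq
  have hDseqMeas : ∀ n, Measurable (Dseq n) := by
    intro n
    apply Measurable.div_const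
    exact ((hFtilU.comp ((measurable_fst.add_const _).prodMk measurable_snd)).sub
      (hFtilU.comp (measurable_fst.prodMk measurable_snd)))
  have hDseqTendsto : ∀ t : ℝ, ∀ x ∉ N,
      Tendsto (fun n => Dseq n (t, x)) atTop
        (𝓝 (deriv (fun t' => f t' x * φ t' x) t)) := by
    intro t x hx
    have h1 : ∀ s : ℝ, Ftil s x = f s x * φ s x := fun s => by
      simp only [hFtil, if_neg hx]
    have h2 := slope_seq_tendsto (g := fun t' => f t' x * φ t' x) (t := t)
      ((hNd x hx t).hasDerivAt)
    refine h2.congr fun n => ?_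
    simp only [hDseq, h1]
  -- measurability of the derivative slice at θ
  have hF'_meas : AEStronglyMeasurable
      (fun x => deriv (fun t' => f t' x * φ t' x) θ) (volume : Measure ℝ) := by
    refine (aemeasurable_of_tendsto_metrizable_ae' (f := fun n x => Dseq n (θ, x))
      (fun n => ((hDseqMeas n).comp (measurable_prodMk_left)).aemeasurable) ?_).aestronglyMeasurable
    filter_upwards [hNae] with x hx
    exact hDseqTendsto θ x hx
  -- Fubini argument for a.e. bound
  set ρ : Measure (ℝ × ℝ) := (volume.restrict (Metric.ball θ ε)).prod volume with hρ
  have hNρ : ρ {p : ℝ × ℝ | p.2 ∈ N} = 0 := by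
    have he : {p : ℝ × ℝ | p.2 ∈ N} = Set.univ ×ˢ N := by
      ext p; simp [Set.mem_prod]
    rw [hρ, he, Measure.prod_prod, hNnull, mul_zero]
  have hDae : AEMeasurable (fun p : ℝ × ℝ => deriv (fun t' => f t' p.2 * φ t' p.2) p.1) ρ := by
    refine aemeasurable_of_tendsto_metrizable_ae' (f := Dseq)
      (fun n => (hDseqMeas n).aemeasurable) ?_
    have : ∀ᵐ p ∂ρ, p.2 ∉ N := by
      rw [ae_iff]
      refine measure_mono_null (fun p hp => ?_) hNρ
      simpa using hp
    filter_upwards [this] with p hp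
    exact hDseqTendsto p.1 p.2 hp
  obtain ⟨m', hm'sm, hm'eq⟩ : ∃ m' : ℝ → ℝ, StronglyMeasurable m' ∧ m =ᵐ[volume] m' := by
    exact ⟨hm_int.1.mk m, hm_int.1.stronglyMeasurable_mk, hm_int.1.ae_eq_mk⟩
  set Dm : ℝ × ℝ → ℝ := hDae.mk _ with hDmdef
  have hDm_meas : Measurable Dm := hDae.measurable_mk
  have hDm_eq : (fun p : ℝ × ℝ => deriv (fun t' => f t' p.2 * φ t' p.2) p.1) =ᵐ[ρ] Dm :=
    hDae.ae_eq_mk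
  set T : Set (ℝ × ℝ) := {p | ¬ |Dm p| ≤ m' p.2} with hTdef
  have hTm : MeasurableSet T :=
    (measurableSet_le hDm_meas.abs (hm'sm.measurable.comp measurable_snd)).compl
  have hT0 : ρ T = 0 := by
    rw [hρ, Measure.measure_prod_null hTm]
    have h1 := Measure.ae_ae_of_ae_prod (hρ ▸ hDm_eq)
    have h2 : ∀ᵐ t ∂(volume.restrict (Metric.ball θ ε)), t ∈ Metric.ball θ ε :=
      ae_restrict_mem measurableSet_ball
    filter_upwards [h1, h2] with t ht1 ht2
    show volume (Prod.mk t ⁻¹' T) = 0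
    have hb := hm_bound t (by rwa [Metric.mem_ball, Real.dist_eq] at ht2)
    have : ∀ᵐ x ∂(volume : Measure ℝ), |Dm (t, x)| ≤ m' x := by
      filter_upwards [ht1, hb, hm'eq] with x hx1 hx2 hx3
      rw [← hx1, ← hx3]
      exact hx2
    rw [ae_iff] at this
    convert this using 2
    rfl
  have hae2 : ∀ᵐ p ∂ρ, |Dm p| ≤ m' p.2 := by
    rw [ae_iff]
    exact hT0
  have hmeqρ : ∀ᵐ p ∂ρ, m p.2 = m' p.2 := by
    rw [ae_iff]
    refine measure_mono_null (fun p hp => ?_)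
      (show ρ (Set.univ ×ˢ toMeasurable volume {x | ¬ m x = m' x}) = 0 by
        rw [hρ, Measure.prod_prod, measure_toMeasurable]
        rw [show volume {x | ¬ m x = m' x} = 0 from hm'eq]
        exact mul_zero _)
    exact ⟨Set.mem_univ _, subset_toMeasurable _ _ hp⟩
  have hae3 : ∀ᵐ p ∂ρ, |deriv (fun t' => f t' p.2 * φ t' p.2) p.1| ≤ m p.2 := by
    filter_upwards [hDm_eq, hae2, hmeqρ] with p h1 h2 h3
    rw [h1, h3]
    exact h2
  have hswap : ∀ᵐ q ∂((volume : Measure ℝ).prod (volume.restrict (Metric.ball θ ε))),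
      |deriv (fun t' => f t' q.1 * φ t' q.1) q.2| ≤ m q.1 := by
    have hmp := Measure.measurePreserving_swap
      (μ := (volume : Measure ℝ)) (ν := volume.restrict (Metric.ball θ ε))
    exact hmp.quasiMeasurePreserving.ae (hρ ▸ hae3)
  have hfin : ∀ᵐ x ∂(volume : Measure ℝ), ∀ᵐ t ∂(volume.restrict (Metric.ball θ ε)),
      |deriv (fun t' => f t' x * φ t' x) t| ≤ m x :=
    Measure.ae_ae_of_ae_prod hswap
  -- a.e. Lipschitz property on the ball
  have h_lip : ∀ᵐ x ∂(volume : Measure ℝ),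
      LipschitzOnWith (Real.nnabs (m x)) (fun t => f t x * φ t x) (Metric.ball θ ε) := by
    filter_upwards [hfin, hNae] with x hx hxN
    rw [lipschitzOnWith_iff_dist_le_mul]
    intro a ha b hb
    have hIoc_sub : Set.uIoc b a ⊆ Metric.ball θ ε := fun t ht =>
      ((convex_ball θ ε).ordConnected.uIcc_subset hb ha) (Set.Ioc_subset_Icc_self ht)
    have hbound2 : ∀ᵐ t ∂(volume.restrict (Set.uIoc b a)),
        ‖deriv (fun t' => f t' x * φ t' x) t‖ ≤ m x := by
      refine ae_restrict_of_ae_restrict_of_subset hIoc_sub ?_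
      exact hx.mono fun t ht => by rwa [Real.norm_eq_abs]
    have hii : IntervalIntegrable (fun t => deriv (fun t' => f t' x * φ t' x) t) volume b a := by
      rw [intervalIntegrable_iff]
      refine Integrable.mono' (g := fun _ => m x) ?_
        ((measurable_deriv _).aestronglyMeasurable) hbound2
      refine (integrableOn_const_iff (C := m x)).mpr (Or.inr ?_)
      rw [Set.uIoc, Real.volume_Ioc]; exact ENNReal.ofReal_lt_top
    have hftc : ∫ t in b..a, deriv (fun t' => f t' x * φ t' x) t
        = f a x * φ a x - f b x * φ b x :=
      intervalIntegral.integral_eq_sub_of_hasDerivAt (fun t _ => (hNd x hxN t).hasDerivAt) hii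
    have hle := intervalIntegral.norm_integral_le_abs_of_norm_le (μ := (volume : Measure ℝ))
      (a := b) (b := a) hbound2 intervalIntegrable_const
    rw [hftc, intervalIntegral.integral_const, smul_eq_mul] at hle
    rw [Real.dist_eq, Real.dist_eq]
    calc |f a x * φ a x - f b x * φ b x| ≤ |(a - b) * m x| := by
          rwa [Real.norm_eq_abs] at hle
      _ = |m x| * |a - b| := by rw [abs_mul, mul_comm]
      _ = ↑(Real.nnabs (m x)) * |a - b| := by rw [Real.coe_nnabs]
  -- differentiation under the integral sign
  have key := hasDerivAt_integral_of_dominated_loc_of_lip (μ := (volume : Measure ℝ))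
    (F := fun t x => f t x * φ t x)
    (F' := fun x => deriv (fun t' => f t' x * φ t' x) θ) (x₀ := θ) (bound := m)
    (Metric.ball_mem_nhds θ εpos) (Eventually.of_forall fun t => (hmeas t).aestronglyMeasurable) (hint θ)
    hF'_meas h_lip hm_int
    (hNae.mono fun x hx => (hNd x hx θ).hasDerivAt)
  -- rewriting the function
  have hfun : (fun t => ∫ x, f t x ∂(gaussianReal (μ t) (((σ t) ^ 2).toNNReal)))
      = fun t => ∫ x, f t x * φ t x := by
    funext t
    rw [integral_gaussianReal_eq_mul (μ t) (hv t) (fun x => f t x)]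
    refine integral_congr_ae (Eventually.of_forall fun x => ?_)
    beta_reduce
    rw [← hφ t x, mul_comm]
  -- rewriting the value of the derivative
  have hval : (∫ x, (f θ x * (deriv (fun θ' => φ θ' x) θ / φ θ x)
      + deriv (fun θ' => f θ' x) θ) ∂(gaussianReal (μ θ) (((σ θ) ^ 2).toNNReal)))
      = ∫ x, deriv (fun t' => f t' x * φ t' x) θ := by
    rw [integral_gaussianReal_eq_mul _ (hv θ) _]
    refine integral_congr_ae (hNae.mono fun x hx => ?_)
    have hφd := hφdiff x θ
    have hfd : DifferentiableAt ℝ (fun t => f t x) θ := by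
      have he : (fun t => f t x) = fun t => (f t x * φ t x) / φ t x :=
        funext fun t => (mul_div_cancel_right₀ _ (hφpos t x).ne').symm
      rw [he]
      exact (hNd x hx θ).div hφd (hφpos θ x).ne'
    have hprod : deriv (fun t' => f t' x * φ t' x) θ
        = deriv (fun t => f t x) θ * φ θ x + f θ x * deriv (fun t => φ t x) θ :=
      deriv_mul hfd hφd
    beta_reduce
    rw [← hφ θ x, hprod]
    have hne := (hφpos θ x).ne'
    field_simp
    ring
  rw [hfun, hval]
  exact key.2
end

section
/- Let θ₀ ∈ (0,1) and f : ℝ → ℕ → ℝ. Suppose there exist ε > 0 with (θ₀ − ε, θ₀ + ε) ⊆ (0,1) and C ≥ 0 such that for all θ ∈ (θ₀ − ε, θ₀ + ε) and all n ∈ ℕ, the map θ ↦ f θ n is differentiable at θ, |f θ n| ≤ C, and |∂_θ f θ n| ≤ C. Then the loss L(θ) = ∑'_{n ∈ ℕ} f θ n · (1 − θ)ⁿ · θ is differentiable at θ₀, with L'(θ₀) = ∑'_{n ∈ ℕ} (1 − θ₀)ⁿ · θ₀ · ( f θ₀ n · (1/θ₀ − n/(1 − θ₀)) + ∂_θ f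 θ₀ n ). That is, the REINFORCE gradient estimator for the geometric distribution is unbiased. -/
set_option maxHeartbeats 1000000


/-- **Unbiasedness of the REINFORCE gradient estimator for the geometric distribution.**
Let `θ₀ ∈ (0,1)` and suppose on a neighborhood `(θ₀ − ε, θ₀ + ε) ⊆ (0,1)` the
expectand `f θ n` is differentiable in `θ` with derivative `f' θ n`, and both `f`
and `f'` are uniformly bounded by `C` there.  Then
`L θ = ∑'_n f θ n · (1 − θ)ⁿ · θ` is differentiable at `θ₀`, with
`L'(θ₀) = ∑'_n (1 − θ₀)ⁿ · θ₀ · (f θ₀ n · (1/θ₀ − n/(1 − θ₀)) + f' θ₀ n)`. -/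
theorem geometric_reinforce_unbiased (θ₀ : ℝ) (h0 : 0 < θ₀) (h1 : θ₀ < 1)
    (f f' : ℝ → ℕ → ℝ) (ε : ℝ) (hε : 0 < ε)
    (hsub : Set.Ioo (θ₀ - ε) (θ₀ + ε) ⊆ Set.Ioo (0 : ℝ) 1)
    (C : ℝ) (hC : 0 ≤ C)
    (hderiv : ∀ θ ∈ Set.Ioo (θ₀ - ε) (θ₀ + ε), ∀ n : ℕ,
      HasDerivAt (fun θ' => f θ' n) (f' θ n) θ)
    (hfb : ∀ θ ∈ Set.Ioo (θ₀ - ε) (θ₀ + ε), ∀ n : ℕ, |f θ n| ≤ C)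
    (hf'b : ∀ θ ∈ Set.Ioo (θ₀ - ε) (θ₀ + ε), ∀ n : ℕ, |f' θ n| ≤ C) :
    HasDerivAt (fun θ => ∑' n : ℕ, f θ n * (1 - θ) ^ n * θ)
      (∑' n : ℕ, (1 - θ₀) ^ n * θ₀ *
        (f θ₀ n * (1 / θ₀ - (n : ℝ) / (1 - θ₀)) + f' θ₀ n)) θ₀ := by
  set ε' : ℝ := min ε (θ₀ / 2) with hε'def
  have hε' : 0 < ε' := lt_min hε (by linarith)
  set t : Set ℝ := Set.Ioo (θ₀ - ε') (θ₀ + ε') with htdef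
  have hε'le : ε' ≤ ε := min_le_left _ _
  have htsub : t ⊆ Set.Ioo (θ₀ - ε) (θ₀ + ε) :=
    Set.Ioo_subset_Ioo (by linarith) (by linarith)
  have ht01 : t ⊆ Set.Ioo (0 : ℝ) 1 := fun x hx => hsub (htsub hx)
  set r : ℝ := 1 - θ₀ / 2 with hrdef
  have hr0 : 0 < r := by simp [hrdef]; linarith
  have hr1 : r < 1 := by simp [hrdef]; linarith
  have hmem : ∀ θ ∈ t, 0 < θ ∧ θ < 1 ∧ 0 ≤ 1 - θ ∧ 1 - θ ≤ r := by
    intro θ hθ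
    have h01 := ht01 hθ
    have : θ₀ - ε' < θ := hθ.1
    have hge : θ₀ / 2 ≤ θ := by
      have : ε' ≤ θ₀ / 2 := min_le_right _ _
      linarith
    exact ⟨h01.1, h01.2, by linarith [h01.2], by simp [hrdef]; linarith⟩
  -- the functions and derivatives
  set g : ℕ → ℝ → ℝ := fun n θ => f θ n * (1 - θ) ^ n * θ with hgdef
  set g' : ℕ → ℝ → ℝ := fun n θ => f' θ n * ((1 - θ) ^ n * θ) +
      f θ n * ((↑n * (1 - θ) ^ (n - 1) * (-1)) * θ + (1 - θ) ^ n * 1) with hg'def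
  have hgderiv : ∀ n : ℕ, ∀ θ ∈ t, HasDerivAt (g n) (g' n θ) θ := by
    intro n θ hθ
    have hp : HasDerivAt (fun θ' : ℝ => (1 - θ') ^ n * θ')
        ((↑n * (1 - θ) ^ (n - 1) * (-1)) * θ + (1 - θ) ^ n * 1) θ := by
      have h1 : HasDerivAt (fun θ' : ℝ => 1 - θ') (-1) θ := by
        simpa using (hasDerivAt_id θ).const_sub 1
      exact (h1.pow n).mul (hasDerivAt_id θ)
    have := ((hderiv θ (htsub hθ) n).mul hp)
    simpa [hgdef, hg'def, mul_assoc, Pi.mul_def] using this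
  set u : ℕ → ℝ := fun n => C * r ^ n + (C * (r ^ n + ↑n * r ^ n / r)) with hudef
  have hu : Summable u := by
    apply Summable.add
    · exact ((summable_geometric_of_lt_one hr0.le hr1).mul_left C)
    · apply Summable.mul_left
      apply Summable.add
      · exact summable_geometric_of_lt_one hr0.le hr1
      · have hs : Summable (fun n : ℕ => (n : ℝ) ^ 1 * r ^ n) :=
          summable_pow_mul_geometric_of_norm_lt_one 1 (by
            rwa [Real.norm_eq_abs, abs_of_pos hr0])
        exact (hs.div_const r).congr (fun n => by simp [pow_one])
  have hbound : ∀ n : ℕ, ∀ θ ∈ t, ‖g' n θ‖ ≤ u n := by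
    intro n θ hθ
    obtain ⟨hθ0, hθ1, hs0, hsr⟩ := hmem θ hθ
    have hθmem := htsub hθ
    have hfn := hfb θ hθmem n
    have hf'n := hf'b θ hθmem n
    have hpow : (1 - θ) ^ n ≤ r ^ n := pow_le_pow_left₀ hs0 hsr n
    have hpow0 : 0 ≤ (1 - θ) ^ n := pow_nonneg hs0 n
    have hpow1 : (n : ℝ) * (1 - θ) ^ (n - 1) * θ ≤ ↑n * r ^ n / r := by
      rcases Nat.eq_zero_or_pos n with h | h
      · subst h; simp [div_nonneg (pow_nonneg hr0.le _) hr0.le]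
      · have hn1 : (1 - θ) ^ (n - 1) ≤ r ^ (n - 1) := pow_le_pow_left₀ hs0 hsr _
        have : r ^ (n - 1) = r ^ n / r := by
          rw [eq_div_iff hr0.ne', ← pow_succ, Nat.sub_add_cancel h]
        calc (n : ℝ) * (1 - θ) ^ (n - 1) * θ ≤ (n : ℝ) * (1 - θ) ^ (n - 1) * 1 := by
              apply mul_le_mul_of_nonneg_left hθ1.le
              positivity
          _ ≤ (n : ℝ) * r ^ (n - 1) := by
              rw [mul_one]; exact mul_le_mul_of_nonneg_left hn1 (Nat.cast_nonneg n)
          _ = ↑n * r ^ n / r := by rw [this, mul_div_assoc]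
    rw [Real.norm_eq_abs, hg'def]
    calc |f' θ n * ((1 - θ) ^ n * θ) + f θ n * ((↑n * (1 - θ) ^ (n - 1) * (-1)) * θ + (1 - θ) ^ n * 1)|
        ≤ |f' θ n * ((1 - θ) ^ n * θ)| + |f θ n * ((↑n * (1 - θ) ^ (n - 1) * (-1)) * θ + (1 - θ) ^ n * 1)| := abs_add_le _ _
      _ ≤ C * r ^ n + C * (r ^ n + ↑n * r ^ n / r) := by
          apply add_le_add
          · rw [abs_mul]
            have h2 : |(1 - θ) ^ n * θ| ≤ r ^ n := by
              rw [abs_of_nonneg (by positivity)]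
              calc (1 - θ) ^ n * θ ≤ (1 - θ) ^ n * 1 := by
                    exact mul_le_mul_of_nonneg_left hθ1.le hpow0
                _ ≤ r ^ n := by rwa [mul_one]
            exact mul_le_mul hf'n h2 (abs_nonneg _) hC
          · rw [abs_mul]
            have h3 : |(↑n * (1 - θ) ^ (n - 1) * (-1)) * θ + (1 - θ) ^ n * 1| ≤ r ^ n + ↑n * r ^ n / r := by
              rw [mul_one]
              have e : (↑n * (1 - θ) ^ (n - 1) * (-1)) * θ + (1 - θ) ^ n
                  = (1 - θ) ^ n - ↑n * (1 - θ) ^ (n - 1) * θ := by ring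
              rw [e]
              refine (abs_sub _ _).trans ?_
              apply add_le_add
              · rw [abs_of_nonneg hpow0]; exact hpow
              · rw [abs_of_nonneg (by positivity)]; exact hpow1
            exact mul_le_mul hfn h3 (abs_nonneg _) hC
  have hg0 : Summable (fun n => g n θ₀) := by
    apply Summable.of_norm_bounded
      ((summable_geometric_of_lt_one hr0.le hr1).mul_left C)
    intro n
    have hθ₀t : θ₀ ∈ t := by constructor <;> simp [htdef] <;> linarith
    obtain ⟨a, b, c, d⟩ := hmem θ₀ hθ₀t
    rw [Real.norm_eq_abs, hgdef]
    simp only [abs_mul]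
    calc |f θ₀ n| * |(1 - θ₀) ^ n| * |θ₀| ≤ C * r ^ n * 1 := by
          apply mul_le_mul
          · apply mul_le_mul (hfb θ₀ (htsub hθ₀t) n) _ (abs_nonneg _) hC
            rw [abs_of_nonneg (pow_nonneg c n)]
            exact pow_le_pow_left₀ c d n
          · rw [abs_of_pos a]; exact b.le
          · exact abs_nonneg _
          · positivity
      _ = C * r ^ n := mul_one _
  have hθ₀t : θ₀ ∈ t := by constructor <;> simp [htdef] <;> linarith
  have key := hasDerivAt_tsum_of_isPreconnected hu isOpen_Ioo
    isPreconnected_Ioo hgderiv hbound hθ₀t hg0 hθ₀t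
  have hsum_eq : (∑' n : ℕ, g' n θ₀) = ∑' n : ℕ, (1 - θ₀) ^ n * θ₀ *
      (f θ₀ n * (1 / θ₀ - (n : ℝ) / (1 - θ₀)) + f' θ₀ n) := by
    apply tsum_congr
    intro n
    have hθ₀ne : θ₀ ≠ 0 := h0.ne'
    have h1θne : (1 : ℝ) - θ₀ ≠ 0 := by linarith
    rw [hg'def]
    cases n with
    | zero => simp; field_simp; ring
    | succ m =>
      simp only [Nat.add_sub_cancel, Nat.cast_add, Nat.cast_one, pow_succ]
      field_simp
      ring
  rw [← hsum_eq]
  exact key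
end

section
/- Let f : ℕ → ℝ be bounded and θ₀ > 0. Then the function L(θ) = ∑'_{n ∈ ℕ} f(n)·exp(−θ)·θⁿ/n! is differentiable at θ₀, with L'(θ₀) = ∑'_{n ∈ ℕ} (f(n+1) − f(n))·exp(−θ₀)·θ₀ⁿ/n!. That is, for bounded f, the weak-derivative estimator that samples n ∼ Poisson(θ₀) and returns f(n+1) − f(n) is an unbiased estimator of the derivative of the Poisson expectation E_{n∼Poisson(θ)}[f(n)]. -/
open Real

set_option maxHeartbeats 1000000

lemma poisson_aux_summable (f : ℕ → ℝ) (C : ℝ) (hf : ∀ n, |f n| ≤ C) (θ : ℝ) :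
    Summable (fun n : ℕ => f n * θ ^ n / n.factorial) := by
  have hs : Summable (fun n : ℕ => C * (|θ| ^ n / n.factorial)) :=
    (Real.summable_pow_div_factorial |θ|).mul_left C
  refine Summable.of_norm_bounded hs fun n => ?_
  rw [norm_div, norm_mul, Real.norm_eq_abs, Real.norm_eq_abs, Real.norm_eq_abs, abs_pow,
    Nat.abs_cast, mul_div_assoc]
  apply mul_le_mul_of_nonneg_right (hf n)
  positivity

/-- **Correctness of the `poisson_WEAK` built-in derivative.**
For bounded `f : ℕ → ℝ` and `θ₀ > 0`, the Poisson expectation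
`L θ = ∑'_n f n · exp(−θ)·θⁿ/n!` is differentiable at `θ₀` with
`L'(θ₀) = ∑'_n (f (n+1) − f n) · exp(−θ₀)·θ₀ⁿ/n!`; i.e. the weak-derivative
estimator that samples `n ∼ Poisson(θ₀)` and returns `f (n+1) − f n` is an
unbiased estimator of the derivative. -/
theorem poisson_weak_derivative_unbiased (f : ℕ → ℝ) (C : ℝ)
    (hf : ∀ n, |f n| ≤ C) (θ₀ : ℝ) (hθ₀ : 0 < θ₀) :
    HasDerivAt (fun θ => ∑' n : ℕ, f n * (Real.exp (-θ) * θ ^ n / n.factorial))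
      (∑' n : ℕ, (f (n + 1) - f n) * (Real.exp (-θ₀) * θ₀ ^ n / n.factorial)) θ₀ := by
  have hC : 0 ≤ C := (abs_nonneg _).trans (hf 0)
  set R : ℝ := θ₀ + 1 with hR
  have hRpos : 0 < R := by linarith
  -- the power series g
  set g : ℝ → ℝ := fun θ => ∑' n : ℕ, f n * θ ^ n / n.factorial with hg
  set g' : ℕ → ℝ → ℝ := fun n θ => f n * ((n : ℝ) * θ ^ (n - 1)) / n.factorial with hg'
  set u : ℕ → ℝ := fun n => C * ((n : ℝ) * R ^ (n - 1) / n.factorial) with hu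
  have hu_sum : Summable u := by
    apply Summable.mul_left
    rw [← summable_nat_add_iff 1]
    have : (fun n : ℕ => ((n + 1 : ℕ) : ℝ) * R ^ (n + 1 - 1) / (n + 1).factorial)
        = fun n : ℕ => R ^ n / n.factorial := by
      funext n
      have : ((n + 1).factorial : ℝ) = ((n+1 : ℕ) : ℝ) * n.factorial := by
        rw [Nat.factorial_succ]; push_cast; ring
      rw [this]
      have hn1 : ((n + 1 : ℕ) : ℝ) ≠ 0 := by positivity
      rw [Nat.add_sub_cancel]
      field_simp
    rw [this]
    exact Real.summable_pow_div_factorial R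
  have hderiv : ∀ (n : ℕ) (θ : ℝ), HasDerivAt (fun θ => f n * θ ^ n / n.factorial)
      (g' n θ) θ := by
    intro n θ
    have h := (hasDerivAt_pow n θ).const_mul (f n)
    simpa [hg', mul_div_assoc, div_eq_mul_inv, mul_comm, mul_assoc, mul_left_comm]
      using h.div_const (n.factorial : ℝ)
  have hbound : ∀ (n : ℕ) (θ : ℝ), θ ∈ Set.Ioo (-R) R → ‖g' n θ‖ ≤ u n := by
    intro n θ hθ
    have hθabs : |θ| ≤ R := by
      rw [abs_le]; constructor <;> [linarith [hθ.1]; linarith [hθ.2]]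
    have h1 : (0:ℝ) < n.factorial := by positivity
    rw [hg', hu, norm_div, norm_mul, norm_mul, Real.norm_eq_abs, Real.norm_eq_abs,
      Real.norm_eq_abs, Real.norm_eq_abs, abs_pow, Nat.abs_cast, Nat.abs_cast,
      mul_div_assoc]
    have h2 : |θ| ^ (n - 1) ≤ R ^ (n - 1) := pow_le_pow_left₀ (abs_nonneg θ) hθabs _
    have h3 : |f n| * ((n : ℝ) * |θ| ^ (n - 1) / n.factorial)
        ≤ C * ((n : ℝ) * R ^ (n - 1) / n.factorial) := by
      apply mul_le_mul (hf n) _ (by positivity) hC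
      gcongr
    exact h3
  have hmem : θ₀ ∈ Set.Ioo (-R) R := ⟨by linarith, by linarith⟩
  have hgd : HasDerivAt g (∑' n : ℕ, g' n θ₀) θ₀ :=
    hasDerivAt_tsum_of_isPreconnected hu_sum isOpen_Ioo (isPreconnected_Ioo)
      (fun n y _ => hderiv n y) hbound hmem (poisson_aux_summable f C hf θ₀) hmem
  -- summability of g' θ₀
  have hg'sum : Summable (fun n => g' n θ₀) := by
    apply Summable.of_norm_bounded hu_sum
    intro n; exact hbound n θ₀ hmem
  -- identify the derivative sum
  have hkey : ∑' n : ℕ, g' n θ₀ = ∑' n : ℕ, f (n + 1) * θ₀ ^ n / n.factorial := by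
    rw [Summable.tsum_eq_zero_add hg'sum]
    have h0 : g' 0 θ₀ = 0 := by simp [hg']
    have hsucc : ∀ n : ℕ, g' (n + 1) θ₀ = f (n + 1) * θ₀ ^ n / n.factorial := by
      intro n
      rw [hg']
      have : ((n + 1).factorial : ℝ) = ((n+1 : ℕ) : ℝ) * n.factorial := by
        rw [Nat.factorial_succ]; push_cast; ring
      simp only [Nat.add_sub_cancel, this]
      have hn1 : ((n + 1 : ℕ) : ℝ) ≠ 0 := by positivity
      have hfac : (n.factorial : ℝ) ≠ 0 := by positivity
      field_simp
    rw [h0, zero_add]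
    exact tsum_congr hsucc
  -- product with exp(-θ)
  have hexp : HasDerivAt (fun θ : ℝ => Real.exp (-θ)) (-Real.exp (-θ₀)) θ₀ := by
    simpa [Function.comp_def] using (Real.hasDerivAt_exp (-θ₀)).comp θ₀ ((hasDerivAt_id θ₀).neg)
  have hprod := hexp.mul hgd
  have hfun : (fun θ => Real.exp (-θ) * g θ)
      = fun θ => ∑' n : ℕ, f n * (Real.exp (-θ) * θ ^ n / n.factorial) := by
    funext θ
    rw [hg, ← tsum_mul_left]
    exact tsum_congr fun n => by ring
  simp only [Pi.mul_def] at hprod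
  rw [hfun] at hprod
  refine hprod.congr_deriv (Eq.symm ?_)
  rw [hkey]
  have hs1 := poisson_aux_summable (fun n => f (n+1)) C (fun n => hf (n+1)) θ₀
  have hs2 := poisson_aux_summable f C hf θ₀
  have : (fun n : ℕ => (f (n + 1) - f n) * (Real.exp (-θ₀) * θ₀ ^ n / n.factorial))
      = fun n : ℕ => Real.exp (-θ₀) * (f (n+1) * θ₀ ^ n / n.factorial)
        - Real.exp (-θ₀) * (f n * θ₀ ^ n / n.factorial) := by
    funext n; ring
  rw [this, Summable.tsum_sub (hs1.mul_left _) (hs2.mul_left _), tsum_mul_left, tsum_mul_left]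
  ring
end

section
/- Let α be a finite type and N ≥ 2 a natural number. Let p : α → ℝ with p(x) > 0 for all x and ∑_{x ∈ α} p(x) = 1, and let p' : α → ℝ with ∑_{x ∈ α} p'(x) = 0 (the pointwise derivative of a parameterized family of probability mass functions at the current parameter). Let f : α → ℝ. Then ∑_{ω : Fin N → α} ( ∏_{i : Fin N} p(ω i) ) · ( (1/N) · ∑_{i : Fin N} (p'(ω i)/p(ω i)) · ( f(ω i) − (1/(N−1)) · ∑_{j ≠ i} f(ω j) ) ) = ∑_{x ∈ α} p'(x) · f(x). That is, the leave-one-out score-function estimator with N i.i.d. samples and empirical baselines is unbiased for the derivative ∑_x p'(x)·f(x) of the expectation of f. -/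
open Finset

private lemma sum_pi_prod {α : Type*} [Fintype α] {N : ℕ} (g : Fin N → α → ℝ) :
    ∑ ω : Fin N → α, ∏ i, g i (ω i) = ∏ i, ∑ x, g i x := by
  rw [Finset.prod_univ_sum (fun _ => (univ : Finset α)) g, Fintype.piFinset_univ]

private lemma expect_one {α : Type*} [Fintype α] {N : ℕ} (p : α → ℝ)
    (hp_sum : ∑ x, p x = 1) (i₀ : Fin N) (h : α → ℝ) :
    ∑ ω : Fin N → α, (∏ i, p (ω i)) * h (ω i₀) = ∑ x, p x * h x := by
  have : ∀ ω : Fin N → α, (∏ i, p (ω i)) * h (ω i₀)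
      = ∏ i, (p (ω i) * if i = i₀ then h (ω i) else 1) := by
    intro ω
    rw [Finset.prod_mul_distrib]
    congr 1
    rw [Finset.prod_ite_eq' univ i₀ (fun i => h (ω i))]
    simp
  simp_rw [this]
  rw [sum_pi_prod (fun i x => p x * if i = i₀ then h x else 1)]
  rw [← Finset.mul_prod_erase univ _ (Finset.mem_univ i₀)]
  have h1 : ∑ x, p x * (if i₀ = i₀ then h x else 1) = ∑ x, p x * h x := by simp
  have h2 : ∀ i ∈ univ.erase i₀, (∑ x, p x * if i = i₀ then h x else 1) = 1 := by
    intro i hi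
    rw [Finset.mem_erase] at hi
    simp [hi.1, hp_sum]
  rw [h1, Finset.prod_eq_one h2, mul_one]

private lemma expect_two {α : Type*} [Fintype α] {N : ℕ} (p : α → ℝ)
    (hp_sum : ∑ x, p x = 1) (i₀ j₀ : Fin N) (hij : i₀ ≠ j₀) (h k : α → ℝ) :
    ∑ ω : Fin N → α, (∏ i, p (ω i)) * (h (ω i₀) * k (ω j₀))
      = (∑ x, p x * h x) * (∑ x, p x * k x) := by
  have key : ∀ ω : Fin N → α, (∏ i, p (ω i)) * (h (ω i₀) * k (ω j₀))
      = ∏ i, (p (ω i) * ((if i = i₀ then h (ω i) else 1) * (if i = j₀ then k (ω i) else 1))) := by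
    intro ω
    rw [Finset.prod_mul_distrib, Finset.prod_mul_distrib]
    rw [Finset.prod_ite_eq' univ i₀ (fun i => h (ω i)),
      Finset.prod_ite_eq' univ j₀ (fun i => k (ω i))]
    simp
  simp_rw [key]
  rw [sum_pi_prod (fun i x => p x * ((if i = i₀ then h x else 1) * (if i = j₀ then k x else 1)))]
  rw [← Finset.mul_prod_erase univ _ (Finset.mem_univ i₀),
    ← Finset.mul_prod_erase (univ.erase i₀) _ (Finset.mem_erase.2 ⟨hij.symm, Finset.mem_univ j₀⟩)]
  have h1 : (∑ x, p x * ((if i₀ = i₀ then h x else 1) * (if i₀ = j₀ then k x else 1)))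
      = ∑ x, p x * h x := by simp [hij]
  have h2 : (∑ x, p x * ((if j₀ = i₀ then h x else 1) * (if j₀ = j₀ then k x else 1)))
      = ∑ x, p x * k x := by simp [hij.symm]
  have h3 : ∀ i ∈ (univ.erase i₀).erase j₀,
      (∑ x, p x * ((if i = i₀ then h x else 1) * (if i = j₀ then k x else 1))) = 1 := by
    intro i hi
    rw [Finset.mem_erase, Finset.mem_erase] at hi
    simp [hi.1, hi.2.1, hp_sum]
  rw [h1, h2, Finset.prod_eq_one h3, mul_one]

/-- **Unbiasedness of the leave-one-out score-function estimator.**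
Let `p` be a strictly positive probability mass function on a finite type with
pointwise parameter-derivative `p'` (so `∑ p' = 0`), and `f` an expectand.  Drawing
`N ≥ 2` i.i.d. samples and using, for each sample, the empirical mean of the other
`N − 1` samples as a baseline, yields an unbiased estimate of `∑_x p' x · f x`,
the derivative of the expectation of `f`. -/
theorem leave_one_out_unbiased {α : Type*} [Fintype α] (N : ℕ) (hN : 2 ≤ N)
    (p p' f : α → ℝ)
    (hp_pos : ∀ x, 0 < p x) (hp_sum : ∑ x, p x = 1) (hp'_sum : ∑ x, p' x = 0) :
    ∑ ω : Fin N → α, (∏ i, p (ω i)) *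
        ((1 / (N : ℝ)) * ∑ i, (p' (ω i) / p (ω i)) *
          (f (ω i) - (1 / ((N : ℝ) - 1)) * ∑ j ∈ univ.erase i, f (ω j)))
      = ∑ x, p' x * f x := by
  have hpne : ∀ x, p x ≠ 0 := fun x => (hp_pos x).ne'
  have hNpos : (0:ℝ) < N := by positivity
  -- step 1: move constants out and swap sums
  have step1 : ∑ ω : Fin N → α, (∏ i, p (ω i)) *
        ((1 / (N : ℝ)) * ∑ i, (p' (ω i) / p (ω i)) *
          (f (ω i) - (1 / ((N : ℝ) - 1)) * ∑ j ∈ univ.erase i, f (ω j)))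
      = (1 / (N : ℝ)) * ∑ i : Fin N, ∑ ω : Fin N → α, (∏ k, p (ω k)) *
          ((p' (ω i) / p (ω i)) *
            (f (ω i) - (1 / ((N : ℝ) - 1)) * ∑ j ∈ univ.erase i, f (ω j))) := by
    have e1 : ∀ ω : Fin N → α, (∏ i, p (ω i)) *
        ((1 / (N : ℝ)) * ∑ i, (p' (ω i) / p (ω i)) *
          (f (ω i) - (1 / ((N : ℝ) - 1)) * ∑ j ∈ univ.erase i, f (ω j)))
        = ∑ i : Fin N, (1 / (N : ℝ)) * ((∏ k, p (ω k)) *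
          ((p' (ω i) / p (ω i)) *
            (f (ω i) - (1 / ((N : ℝ) - 1)) * ∑ j ∈ univ.erase i, f (ω j)))) := by
      intro ω
      rw [Finset.mul_sum, Finset.mul_sum]
      apply Finset.sum_congr rfl
      intro i _
      ring
    simp_rw [e1]
    rw [Finset.sum_comm]
    simp_rw [← Finset.mul_sum]
  rw [step1]
  -- step 2: per-i inner expectation
  have inner : ∀ i : Fin N, ∑ ω : Fin N → α, (∏ k, p (ω k)) *
        ((p' (ω i) / p (ω i)) *
          (f (ω i) - (1 / ((N : ℝ) - 1)) * ∑ j ∈ univ.erase i, f (ω j)))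
      = ∑ x, p' x * f x := by
    intro i
    have expand : ∀ ω : Fin N → α, (∏ k, p (ω k)) *
          ((p' (ω i) / p (ω i)) *
            (f (ω i) - (1 / ((N : ℝ) - 1)) * ∑ j ∈ univ.erase i, f (ω j)))
        = (∏ k, p (ω k)) * ((p' (ω i) / p (ω i)) * f (ω i))
          - (1 / ((N : ℝ) - 1)) * ∑ j ∈ univ.erase i,
              (∏ k, p (ω k)) * ((p' (ω i) / p (ω i)) * f (ω j)) := by
      intro ω
      rw [Finset.mul_sum]
      rw [Finset.mul_sum]
      ring_nf
      rw [Finset.mul_sum]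
      ring_nf
    simp_rw [expand]
    rw [Finset.sum_sub_distrib, ← Finset.mul_sum, Finset.sum_comm]
    have t1 : ∑ ω : Fin N → α, (∏ k, p (ω k)) * ((p' (ω i) / p (ω i)) * f (ω i))
        = ∑ x, p' x * f x := by
      rw [expect_one p hp_sum i (fun x => p' x / p x * f x)]
      apply Finset.sum_congr rfl
      intro x _
      rw [show p x * (p' x / p x * f x) = p' x / p x * p x * f x by ring,
        div_mul_cancel₀ _ (hpne x)]
    have t2 : ∀ j ∈ univ.erase i, ∑ ω : Fin N → α,
        (∏ k, p (ω k)) * ((p' (ω i) / p (ω i)) * f (ω j)) = 0 := by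
      intro j hj
      have hij : i ≠ j := (Finset.mem_erase.1 hj).1.symm
      rw [expect_two p hp_sum i j hij (fun x => p' x / p x) f]
      have : ∑ x, p x * (p' x / p x) = 0 := by
        rw [← hp'_sum]
        apply Finset.sum_congr rfl
        intro x _
        rw [mul_comm, div_mul_cancel₀ _ (hpne x)]
      rw [this, zero_mul]
    rw [t1, Finset.sum_eq_zero t2, mul_zero, sub_zero]
  simp_rw [inner]
  rw [Finset.sum_const, card_univ, Fintype.card_fin, nsmul_eq_mul]
  field_simp
end

section
/- Let (X, Σ, μ) be a σ-finite measure space, let q : X → ℝ be measurable with q(x) > 0 for μ-almost every x, and let p : ℝ → X → ℝ and f : ℝ → X → ℝ with x ↦ p(θ, x)·f(θ, x) measurable for each θ. Assume: (i) for each θ, x ↦ p(θ, x)·f(θ, x) is μ-integrable; (ii) for μ-almost every x, the map θ ↦ p(θ, x)·f(θ, x) is differentiable; and (iii) its θ-derivative is locally dominated with respect to μ. Then L(θ) = ∫ f(θ, x)·p(θ, x) dμ(x) is differentiable at every θ, with L'(θ) = ∫ ∂_θ( (p(θ, x)/q(x))·f(θ, x) ) · q(x) dμ(x). That is, the importance-sampling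 derivative estimator, which samples x from the proposal with density q and returns the θ-derivative of the importance weight times the loss, is unbiased. -/
open MeasureTheory

/-- An everywhere differentiable real function whose derivative is a.e. bounded by `M`
on a ball is `M`-Lipschitz on that ball. -/
lemma lipschitzOnWith_of_ae_deriv_le {g : ℝ → ℝ} {θ₀ ε M : ℝ}
    (hg : ∀ t, DifferentiableAt ℝ g t) (hM0 : 0 ≤ M)
    (hM : ∀ᵐ t ∂(volume.restrict (Metric.ball θ₀ ε)), |deriv g t| ≤ M) :
    LipschitzOnWith (Real.nnabs M) g (Metric.ball θ₀ ε) := by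
  rw [lipschitzOnWith_iff_dist_le_mul]
  have habsM : ((Real.nnabs M : NNReal) : ℝ) = M := by
    rw [Real.coe_nnabs, abs_of_nonneg hM0]
  have key : ∀ a ∈ Metric.ball θ₀ ε, ∀ b ∈ Metric.ball θ₀ ε, a ≤ b →
      dist (g a) (g b) ≤ M * dist a b := by
    intro a ha b hb hab
    have hIcc : Set.Icc a b ⊆ Metric.ball θ₀ ε :=
      ((convex_ball θ₀ ε).ordConnected).out ha hb
    have hM' : ∀ᵐ t ∂(volume.restrict (Set.Icc a b)), |deriv g t| ≤ M :=
      ae_restrict_of_ae_restrict_of_subset hIcc hM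
    have hmeas : Measurable (deriv g) := measurable_deriv g
    have hInt : IntegrableOn (deriv g) (Set.Icc a b) volume := by
      refine Integrable.mono' (integrable_const M) hmeas.aestronglyMeasurable ?_
      simpa [Real.norm_eq_abs] using hM'
    have hII : IntervalIntegrable (deriv g) volume a b := by
      rw [intervalIntegrable_iff_integrableOn_Icc_of_le hab]
      exact hInt
    have hFTC : (∫ t in a..b, deriv g t) = g b - g a :=
      intervalIntegral.integral_eq_sub_of_hasDerivAt
        (fun t _ => (hg t).hasDerivAt) hII
    have habs : |∫ t in a..b, deriv g t| ≤ M * (b - a) := by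
      calc |∫ t in a..b, deriv g t| ≤ ∫ t in a..b, |deriv g t| :=
            intervalIntegral.abs_integral_le_integral_abs hab
        _ ≤ ∫ _t in a..b, M :=
            intervalIntegral.integral_mono_ae_restrict hab hII.abs
              intervalIntegrable_const hM'
        _ = M * (b - a) := by
            simp [intervalIntegral.integral_const, smul_eq_mul, mul_comm]
    rw [Real.dist_eq, Real.dist_eq]
    have h1 : |g a - g b| = |∫ t in a..b, deriv g t| := by
      rw [hFTC, abs_sub_comm]
    have h2 : b - a ≤ |a - b| := by
      rw [abs_sub_comm]; exact le_abs_self _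
    calc |g a - g b| = |∫ t in a..b, deriv g t| := h1
      _ ≤ M * (b - a) := habs
      _ ≤ M * |a - b| := by nlinarith
  intro a ha b hb
  rw [habsM]
  rcases le_total a b with h | h
  · exact key a ha b hb h
  · rw [dist_comm (g a), dist_comm a]
    exact key b hb a ha h

/-- **Unbiasedness of the importance-sampling derivative estimator.**
Let `q` be a measurable a.e.-positive proposal density and `p θ ·` the target
density on a σ-finite measure space `(X, μ)`.  If `x ↦ p θ x · f θ x` is
measurable and integrable for each `θ`, differentiable in `θ` for a.e. `x`, with
locally dominated `θ`-derivative, then `L θ = ∫ f θ x · p θ x dμ` is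
differentiable with `L'(θ) = ∫ ∂_θ((p θ x / q x) · f θ x) · q x dμ`:
sampling from the proposal `q` and returning the `θ`-derivative of the importance
weight times the loss is unbiased. -/
theorem importance_sampling_derivative_unbiased {X : Type*} [MeasurableSpace X]
    (μ : Measure X) [SigmaFinite μ]
    (q : X → ℝ) (hq_meas : Measurable q) (hq_pos : ∀ᵐ x ∂μ, 0 < q x)
    (p f : ℝ → X → ℝ)
    (hmeas : ∀ θ : ℝ, Measurable (fun x => p θ x * f θ x))
    (hint : ∀ θ : ℝ, Integrable (fun x => p θ x * f θ x) μ)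
    (hderiv : ∀ᵐ x ∂μ, ∀ θ : ℝ, DifferentiableAt ℝ (fun θ' => p θ' x * f θ' x) θ)
    (hdom : LocallyDominated μ (fun θ x => deriv (fun θ' => p θ' x * f θ' x) θ)) :
    ∀ θ : ℝ,
      HasDerivAt (fun θ' => ∫ x, f θ' x * p θ' x ∂μ)
        (∫ x, deriv (fun θ' => (p θ' x / q x) * f θ' x) θ * q x ∂μ) θ := by
  classical
  intro θ₀
  obtain ⟨ε, εpos, m, hm_int, hm_nonneg, hm_bound⟩ := hdom θ₀
  -- the bad set where differentiability can fail
  set T : Set X :=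
    toMeasurable μ {x | ¬ ∀ θ : ℝ, DifferentiableAt ℝ (fun θ' => p θ' x * f θ' x) θ}
    with hTdef
  have hT_meas : MeasurableSet T := measurableSet_toMeasurable _ _
  have hT_null : μ T = 0 := by
    rw [hTdef, measure_toMeasurable]
    exact ae_iff.mp hderiv
  have hS : ∀ᵐ x ∂μ, x ∉ T := measure_eq_zero_iff_ae_notMem.mp hT_null
  have hS_diff : ∀ x, x ∉ T → ∀ θ : ℝ,
      DifferentiableAt ℝ (fun θ' => p θ' x * f θ' x) θ := by
    intro x hx
    by_contra h
    exact hx (subset_toMeasurable μ _ h)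
  -- the modified function, continuous in `θ` for every `x`
  set Ft : ℝ → X → ℝ := fun θ x => if x ∈ T then 0 else p θ x * f θ x with hFtdef
  have hFt_eq : ∀ x, x ∉ T → (fun θ' => Ft θ' x) = fun θ' => p θ' x * f θ' x := by
    intro x hx
    funext θ'
    simp only [hFtdef, if_neg hx]
  have hFt_meas : ∀ θ, Measurable (Ft θ) := by
    intro θ
    exact Measurable.ite hT_meas measurable_const (hmeas θ)
  have hFt_diff : ∀ x, ∀ θ : ℝ, DifferentiableAt ℝ (fun θ' => Ft θ' x) θ := by
    intro x θ
    by_cases hx : x ∈ T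
    · simp only [hFtdef, if_pos hx]
      exact differentiableAt_const 0
    · rw [hFt_eq x hx]
      exact hS_diff x hx θ
  have hFt_cont : ∀ x, Continuous fun θ => Ft θ x := by
    intro x
    have : Differentiable ℝ fun θ => Ft θ x := fun θ => hFt_diff x θ
    exact this.continuous
  have hFt_unc : Measurable (Function.uncurry Ft) :=
    measurable_uncurry_of_continuous_of_measurable hFt_cont hFt_meas
  -- the derivative of the modified function and its joint measurability
  set Dt : ℝ → X → ℝ := fun θ x => deriv (fun θ' => Ft θ' x) θ with hDtdef
  have hDt_unc : Measurable (Function.uncurry Dt) := by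
    have hseq : ∀ z : ℝ × X,
        Filter.Tendsto (fun n : ℕ => slope (fun θ' => Ft θ' z.2) z.1 (z.1 + 1 / (n + 1)))
          Filter.atTop (nhds (Dt z.1 z.2)) := by
      intro z
      have hd : HasDerivAt (fun θ' => Ft θ' z.2) (Dt z.1 z.2) z.1 :=
        (hFt_diff z.2 z.1).hasDerivAt
      have hslope := hasDerivAt_iff_tendsto_slope.mp hd
      refine hslope.comp ?_
      refine tendsto_nhdsWithin_of_tendsto_nhds_of_eventually_within _ ?_ ?_
      · have h0 : Filter.Tendsto (fun n : ℕ => (1 : ℝ) / (n + 1)) Filter.atTop (nhds 0) :=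
          tendsto_one_div_add_atTop_nhds_zero_nat
        have := Filter.Tendsto.add
          (tendsto_const_nhds : Filter.Tendsto (fun _ : ℕ => z.1) Filter.atTop (nhds z.1)) h0
        simpa using this
      · refine Filter.Eventually.of_forall fun n => ?_
        have hne : (1 : ℝ) / (n + 1) ≠ 0 := by positivity
        simp only [Set.mem_compl_iff, Set.mem_singleton_iff]
        intro h
        exact hne (by linarith [h])
    refine measurable_of_tendsto_metrizable (fun n => ?_)
      (tendsto_pi_nhds.mpr hseq)
    have h1 : Measurable fun z : ℝ × X => Ft (z.1 + 1 / (n + 1)) z.2 :=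
      hFt_unc.comp ((measurable_fst.add_const _).prodMk measurable_snd)
    have h2 : Measurable fun z : ℝ × X => Ft z.1 z.2 :=
      hFt_unc.comp (measurable_fst.prodMk measurable_snd)
    have h3 : Measurable fun z : ℝ × X => (z.1 + 1 / (n + 1) - z.1 : ℝ) :=
      (measurable_fst.add_const _).sub measurable_fst
    simp only [slope_def_field]
    exact (h1.sub h2).div h3
  have hDt_sec : ∀ θ, Measurable fun x => Dt θ x := fun θ =>
    hDt_unc.comp (measurable_const.prodMk measurable_id)
  -- a measurable version of the dominating function
  set m' : X → ℝ := hm_int.1.mk m with hm'def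
  have hm'_meas : Measurable m' := hm_int.1.measurable_mk
  have hm'_eq : m =ᵐ[μ] m' := hm_int.1.ae_eq_mk
  -- Fubini swap of the domination quantifiers
  set P : Measure ℝ := volume.restrict (Metric.ball θ₀ ε) with hPdef
  set A : Set (ℝ × X) := {z | |Function.uncurry Dt z| ≤ m' z.2}ᶜ with hAdef
  have hA_meas : MeasurableSet A :=
    (measurableSet_le hDt_unc.abs (hm'_meas.comp measurable_snd)).compl
  have hsec : ∀ᵐ θ ∂P, μ (Prod.mk θ ⁻¹' A) = 0 := by
    filter_upwards [ae_restrict_mem Metric.isOpen_ball.measurableSet] with θ hθ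
    have hθε : |θ - θ₀| < ε := by
      simpa [Real.dist_eq] using Metric.mem_ball.mp hθ
    have hb := hm_bound θ hθε
    rw [← measure_eq_zero_iff_ae_notMem.symm]
    refine measure_eq_zero_iff_ae_notMem.mpr ?_
    filter_upwards [hb, hS, hm'_eq] with x hbx hxT hmx
    simp only [hAdef, Set.mem_preimage, Set.mem_compl_iff, Set.mem_setOf_eq, not_not,
      Function.uncurry]
    have : Dt θ x = deriv (fun θ' => p θ' x * f θ' x) θ := by
      rw [hDtdef]; simp only [hFt_eq x hxT]
    rw [this, ← hmx]
    exact hbx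
  have hA0 : (P.prod μ) A = 0 := by
    rw [Measure.measure_prod_null hA_meas]
    exact hsec
  have hA0' : (μ.prod P) (Prod.swap ⁻¹' A) = 0 := by
    have hswap : Measure.map Prod.swap (μ.prod P) = P.prod μ := Measure.prod_swap
    rw [← hswap, Measure.map_apply measurable_swap hA_meas] at hA0
    exact hA0
  have hae : ∀ᵐ x ∂μ, ∀ᵐ θ ∂P, |Dt θ x| ≤ m' x := by
    have h := Measure.ae_ae_of_ae_prod (measure_eq_zero_iff_ae_notMem.mp hA0')
    filter_upwards [h] with x hx
    filter_upwards [hx] with θ hθ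
    simpa [hAdef, Function.uncurry] using hθ
  -- the Lipschitz bound
  have h_lip : ∀ᵐ x ∂μ,
      LipschitzOnWith (Real.nnabs (m x)) (fun θ => p θ x * f θ x)
        (Metric.ball θ₀ ε) := by
    filter_upwards [hae, hS, hm'_eq] with x hx hxT hmx
    have hlip' : LipschitzOnWith (Real.nnabs (m x)) (fun θ => Ft θ x)
        (Metric.ball θ₀ ε) := by
      refine lipschitzOnWith_of_ae_deriv_le (fun t => hFt_diff x t) (hm_nonneg x) ?_
      filter_upwards [hx] with θ hθ
      rw [hmx]
      exact hθ
    rwa [hFt_eq x hxT] at hlip'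
  -- apply the dominated differentiation theorem
  have hmain := hasDerivAt_integral_of_dominated_loc_of_lip (μ := μ)
    (F := fun θ x => p θ x * f θ x)
    (F' := fun x => deriv (fun θ' => p θ' x * f θ' x) θ₀)
    (bound := m) (Metric.ball_mem_nhds θ₀ εpos)
    (Filter.Eventually.of_forall fun θ => (hmeas θ).aestronglyMeasurable)
    (hint θ₀)
    (by
      have : AEStronglyMeasurable (fun x => Dt θ₀ x) μ :=
        (hDt_sec θ₀).aestronglyMeasurable
      refine this.congr ?_
      filter_upwards [hS] with x hx
      rw [hDtdef]
      simp only [hFt_eq x hx])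
    h_lip hm_int
    (by
      filter_upwards [hS] with x hx
      exact (hS_diff x hx θ₀).hasDerivAt)
  obtain ⟨-, key⟩ := hmain
  -- rewrite the function and the value of the derivative
  have hfun : (fun θ' => ∫ x, f θ' x * p θ' x ∂μ)
      = fun θ' => ∫ x, p θ' x * f θ' x ∂μ := by
    funext θ'
    exact integral_congr_ae (Filter.Eventually.of_forall fun x => mul_comm _ _)
  have hval : (∫ x, deriv (fun θ' => (p θ' x / q x) * f θ' x) θ₀ * q x ∂μ)
      = ∫ x, deriv (fun θ' => p θ' x * f θ' x) θ₀ ∂μ := by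
    refine integral_congr_ae ?_
    filter_upwards [hq_pos, hderiv] with x hqx hdx
    have hfe : (fun θ' => (p θ' x / q x) * f θ' x)
        = fun θ' => (p θ' x * f θ' x) * (q x)⁻¹ := by
      funext θ'
      rw [div_mul_eq_mul_div, div_eq_mul_inv]
    rw [hfe, deriv_mul_const (hdx θ₀), inv_mul_cancel_right₀ (ne_of_gt hqx)]
  rw [hfun, hval]
  exact key
end
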